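/- Under the flat-time assumption t_{1,0} = t_{0,0} = t_{-1,0}, solving the normalization equations X_{0,0} = 0, T_{0,0} = 0, ln U_{0,0} = 0, (ln U)_x^d = 0 for the heat-equation group action yields the unique group parameters λ₁ = −t_{0,0}, λ₂ = −(x_{0,0} + 2(ln u)_x^d), λ₃ = e^{−t_{0,0}}(ln u)_x^d, λ₄ = e^{−t_{0,0}}(−ln u_{0,0} + x_{0,0}(ln u)_x^d + ((ln u)_x^d)²). -/
import Mathlib


/-- Under the flat-time assumption, the normalization equations
`X₀₀ = 0`, `T₀₀ = 0`, `ln U₀₀ = 0`, `(ln U)_x^d = 0` for the heat-equation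
group action determine the group parameters uniquely, and they are given by
the product frame formulas. -/
theorem heat_product_frame
    (xm1 x0 x1 t : ℝ) (um1 u0 u1 : ℝ)
    (hum1 : 0 < um1) (hu0 : 0 < u0) (hu1 : 0 < u1)
    (hx : x1 ≠ xm1)
    (p : ℝ) (hp : p = (Real.log u1 - Real.log um1) / (x1 - xm1))
    (l1 l2 l3 l4 : ℝ) :
    (x0 + 2 * l3 * Real.exp t + l2 = 0 ∧
     t + l1 = 0 ∧
     Real.log u0 - l3 * Real.exp t * x0 - l3 ^ 2 * Real.exp (2 * t)
       + l4 * Real.exp t = 0 ∧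
     ((Real.log u1 - l3 * Real.exp t * x1 - l3 ^ 2 * Real.exp (2 * t)
         + l4 * Real.exp t)
       - (Real.log um1 - l3 * Real.exp t * xm1 - l3 ^ 2 * Real.exp (2 * t)
         + l4 * Real.exp t))
       / ((x1 + 2 * l3 * Real.exp t + l2) - (xm1 + 2 * l3 * Real.exp t + l2)) = 0)
    ↔
    (l1 = -t ∧
     l2 = -(x0 + 2 * p) ∧
     l3 = Real.exp (-t) * p ∧
     l4 = Real.exp (-t) * (-Real.log u0 + x0 * p + p ^ 2)) := by
  have hd : x1 - xm1 ≠ 0 := sub_ne_zero.mpr hx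
  have he : Real.exp t ≠ 0 := (Real.exp_pos t).ne'
  have hA2 : Real.exp (2 * t) = Real.exp t * Real.exp t := by
    rw [two_mul, Real.exp_add]
  have hp' : p * (x1 - xm1) = Real.log u1 - Real.log um1 := by
    rw [hp]; field_simp
  have hE : Real.exp (-t) * Real.exp t = 1 := by
    rw [← Real.exp_add]; simp
  constructor
  · rintro ⟨h1, h2, h3, h4⟩
    have hden : (x1 + 2 * l3 * Real.exp t + l2) - (xm1 + 2 * l3 * Real.exp t + l2)
        = x1 - xm1 := by ring
    rw [hden] at h4
    have hnum := (div_eq_zero_iff.mp h4).resolve_right hd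
    have hl3A : l3 * Real.exp t = p := by
      have h : l3 * Real.exp t * (x1 - xm1) = p * (x1 - xm1) := by
        rw [hp']; linarith [hnum]
      exact mul_right_cancel₀ hd h
    have hl3 : l3 = Real.exp (-t) * p := by
      rw [Real.exp_neg]; field_simp; linear_combination hl3A
    refine ⟨by linarith, by linear_combination h1 - 2 * hl3A, hl3, ?_⟩
    rw [Real.exp_neg]; field_simp
    rw [hA2] at h3
    linear_combination h3 + (x0 + l3 * Real.exp t + p) * hl3A
  · rintro ⟨h1, h2, h3, h4⟩
    subst h1 h2 h3 h4
    refine ⟨by linear_combination 2 * p * hE, by ring, ?_, ?_⟩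
    · rw [hA2]
      linear_combination (-Real.log u0 - p ^ 2 * (Real.exp (-t) * Real.exp t)) * hE
    · apply div_eq_zero_iff.mpr
      left
      rw [hA2]
      linear_combination -hp' - p * (x1 - xm1) * hE
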